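/- Let ρ = Σ_{j=1}^{n} (n−j+1/2)ε_j be the half-sum of positive roots of B_n (n ≥ 3) and λ = ε_1 + ⋯ + ε_{n−1}. Then the sequence (ε_{n−2}−ε_{n−1}, ε_{n−1}−ε_n) links −ε_n − λ + ρ to (−ε_{n−2} − ε_{n−1} + ε_n) − λ + ρ: setting δ = −ε_n − λ + ρ, one has ⟨δ, (ε_{n−2}−ε_{n−1})^∨⟩ ∈ ℤ_{≥0}; with δ₁ = s_{ε_{n−2}−ε_{n−1}}(δ), one has ⟨δ₁, (ε_{n−1}−ε_n)^∨⟩ ∈ ℤ_{≥0}; and s_{ε_{n−1}−ε_n}(δ₁) = (−ε_{n−2} − ε_{n−1} + ε_n) − λ + ρ. -/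

import Mathlib

noncomputable section

/-- The standard basis vector `ε_j` of `ℝ^n`. -/
def eps (n : ℕ) (j : Fin n) : Fin n → ℝ := Pi.single j 1

/-- The standard inner product on `ℝ^n`. -/
def ip {n : ℕ} (v w : Fin n → ℝ) : ℝ := ∑ t, v t * w t

/-- The pairing `⟨v, β^∨⟩ = 2⟨v, β⟩/⟨β, β⟩`. -/
def pairing {n : ℕ} (v β : Fin n → ℝ) : ℝ := 2 * ip v β / ip β β

/-- The reflection `s_β(v) = v - ⟨v, β^∨⟩ β`. -/
def wrefl {n : ℕ} (β v : Fin n → ℝ) : Fin n → ℝ := v - pairing v β • β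

/-- `ρ = Σ_{j=1}^{n} (n-j+1/2) ε_j`, the half sum of positive roots of `B_n` (0-based indices). -/
def rhoB (n : ℕ) : Fin n → ℝ := fun t => (n : ℝ) - (t : ℕ) - 1 / 2

/-- `λ = ε_1 + ⋯ + ε_{n-1}`. -/
def lamB (n : ℕ) : Fin n → ℝ :=
  ∑ j ∈ Finset.univ.filter (fun j : Fin n => (j : ℕ) < n - 1), eps n j

lemma eps_apply {n : ℕ} (i t : Fin n) : eps n i t = if t = i then 1 else 0 := by
  simp [eps, Pi.single_apply]

lemma ip_eps_right {n : ℕ} (v : Fin n → ℝ) (j : Fin n) : ip v (eps n j) = v j := by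
  simp [ip, eps, Pi.single_apply, mul_ite]

lemma ip_sub_right {n : ℕ} (v w w' : Fin n → ℝ) : ip v (w - w') = ip v w - ip v w' := by
  simp [ip, mul_sub, Finset.sum_sub_distrib]

lemma ip_root {n : ℕ} {i j : Fin n} (h : i ≠ j) :
    ip (eps n i - eps n j) (eps n i - eps n j) = 2 := by
  rw [ip_sub_right, ip_eps_right, ip_eps_right]
  simp [eps_apply, h, h.symm]
  norm_num

lemma pairing_root {n : ℕ} (v : Fin n → ℝ) {i j : Fin n} (h : i ≠ j) :
    pairing v (eps n i - eps n j) = v i - v j := by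
  rw [pairing, ip_root h, ip_sub_right, ip_eps_right, ip_eps_right]
  ring

lemma lamB_apply {n : ℕ} (t : Fin n) : lamB n t = if (t : ℕ) < n - 1 then 1 else 0 := by
  simp [lamB, eps, Finset.sum_apply, Finset.sum_pi_single]

set_option maxHeartbeats 1000000 in
/-- In type `B_n` (`n ≥ 3`), the sequence `(ε_{n-2}-ε_{n-1}, ε_{n-1}-ε_n)` links
`-ε_n - λ + ρ` to `(-ε_{n-2}-ε_{n-1}+ε_n) - λ + ρ`. -/
theorem stmt11 (n : ℕ) (hn : 3 ≤ n) :
    (∃ m : ℕ, pairing (-eps n ⟨n - 1, by omega⟩ - lamB n + rhoB n)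
        (eps n ⟨n - 3, by omega⟩ - eps n ⟨n - 2, by omega⟩) = (m : ℝ)) ∧
    (∃ m : ℕ, pairing
        (wrefl (eps n ⟨n - 3, by omega⟩ - eps n ⟨n - 2, by omega⟩)
          (-eps n ⟨n - 1, by omega⟩ - lamB n + rhoB n))
        (eps n ⟨n - 2, by omega⟩ - eps n ⟨n - 1, by omega⟩) = (m : ℝ)) ∧
    wrefl (eps n ⟨n - 2, by omega⟩ - eps n ⟨n - 1, by omega⟩)
        (wrefl (eps n ⟨n - 3, by omega⟩ - eps n ⟨n - 2, by omega⟩)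
          (-eps n ⟨n - 1, by omega⟩ - lamB n + rhoB n)) =
      (-eps n ⟨n - 3, by omega⟩ - eps n ⟨n - 2, by omega⟩ + eps n ⟨n - 1, by omega⟩)
        - lamB n + rhoB n := by
  set i : Fin n := ⟨n - 3, by omega⟩ with hi
  set j : Fin n := ⟨n - 2, by omega⟩ with hj
  set k : Fin n := ⟨n - 1, by omega⟩ with hk
  have hij : i ≠ j := by simp [hi, hj, Fin.ext_iff]; omega
  have hjk : j ≠ k := by simp [hj, hk, Fin.ext_iff]; omega
  have hik : i ≠ k := by simp [hi, hk, Fin.ext_iff]; omega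
  set δ : Fin n → ℝ := -eps n k - lamB n + rhoB n with hδ
  have hc3 : ((n - 3 : ℕ) : ℝ) = (n : ℝ) - 3 := by
    rw [Nat.cast_sub (by omega)]; norm_num
  have hc2 : ((n - 2 : ℕ) : ℝ) = (n : ℝ) - 2 := by
    rw [Nat.cast_sub (by omega)]; norm_num
  have hc1 : ((n - 1 : ℕ) : ℝ) = (n : ℝ) - 1 := by
    rw [Nat.cast_sub (by omega)]; norm_num
  have hdi : δ i = 3 / 2 := by
    simp only [hδ, Pi.add_apply, Pi.sub_apply, Pi.neg_apply, eps_apply, lamB_apply, rhoB,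
      if_neg hik, if_pos (show ((i : ℕ) < n - 1) by simp [hi]; omega)]
    rw [show ((i : ℕ) : ℝ) = ((n - 3 : ℕ) : ℝ) from rfl, hc3]
    ring
  have hdj : δ j = 1 / 2 := by
    simp only [hδ, Pi.add_apply, Pi.sub_apply, Pi.neg_apply, eps_apply, lamB_apply, rhoB,
      if_neg hjk, if_pos (show ((j : ℕ) < n - 1) by simp [hj]; omega)]
    rw [show ((j : ℕ) : ℝ) = ((n - 2 : ℕ) : ℝ) from rfl, hc2]
    ring
  have hdk : δ k = -(1 / 2) := by
    simp only [hδ, Pi.add_apply, Pi.sub_apply, Pi.neg_apply, eps_apply, lamB_apply, rhoB,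
      if_pos rfl, if_neg (show ¬((k : ℕ) < n - 1) by simp [hk])]
    rw [show ((k : ℕ) : ℝ) = ((n - 1 : ℕ) : ℝ) from rfl, hc1]
    norm_num
  have hp1 : pairing δ (eps n i - eps n j) = 1 := by
    rw [pairing_root δ hij, hdi, hdj]; norm_num
  set δ₁ : Fin n → ℝ := wrefl (eps n i - eps n j) δ with hδ₁
  have hδ₁eq : δ₁ = δ - (eps n i - eps n j) := by
    simp [hδ₁, wrefl, hp1]
  have hd1j : δ₁ j = 3 / 2 := by
    simp [hδ₁eq, eps_apply, hij, hij.symm, hdj]; norm_num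
  have hd1k : δ₁ k = -(1 / 2) := by
    simp [hδ₁eq, eps_apply, hik.symm, hjk.symm, hdk]
  have hp2 : pairing δ₁ (eps n j - eps n k) = 2 := by
    rw [pairing_root δ₁ hjk, hd1j, hd1k]; norm_num
  refine ⟨⟨1, by rw [hp1]; norm_num⟩, ⟨2, by rw [hp2]; norm_num⟩, ?_⟩
  rw [show wrefl (eps n j - eps n k) δ₁ = δ₁ - (2 : ℝ) • (eps n j - eps n k) by
    simp [wrefl, hp2]]
  rw [hδ₁eq, hδ]
  funext t
  simp only [Pi.add_apply, Pi.sub_apply, Pi.neg_apply, Pi.smul_apply, smul_eq_mul]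
  by_cases hti : t = i <;> by_cases htj : t = j <;> by_cases htk : t = k <;>
    simp_all [eps_apply, hij, hjk, hik] <;> linarith
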